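/- arXiv:2405.14958 — 5 statements merged into one kernel-verified Lean document; each statement's English description precedes it below -/
import Mathlib

section
/- For every integer n ≥ 1 and every real (or complex) z with |z| < 1, the Gauss hypergeometric function satisfies F(1,1,n+2,z) = ((n+1)/z) · ( ∑_{s=1}^{n} (1/s) ((z-1)/z)^{n-s} − ((z-1)/z)^{n} log(1−z) ). -/
open scoped BigOperators

/-- The Gauss hypergeometric function `₂F₁(a,b;c;z)`, defined by its power series
(convergent for `|z| < 1`). -/
noncomputable def hypF (a b c : ℂ) (z : ℂ) : ℂ :=
  ∑' k : ℕ, ((ascPochhammer ℂ k).eval a * (ascPochhammer ℂ k).eval b /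
      ((ascPochhammer ℂ k).eval c * (Nat.factorial k : ℂ))) * z ^ k


noncomputable def auxA (m k : ℕ) : ℂ := (k.factorial : ℂ) / (m.ascFactorial k : ℂ)

lemma aux_fact_le_asc (m k : ℕ) (hm : 1 ≤ m) : k.factorial ≤ m.ascFactorial k := by
  induction k with
  | zero => simp
  | succ k ih =>
    rw [Nat.factorial_succ, Nat.ascFactorial_succ]
    exact Nat.mul_le_mul (by omega) ih

lemma aux_asc_pos (m k : ℕ) (hm : 1 ≤ m) : 0 < m.ascFactorial k :=
  lt_of_lt_of_le (Nat.factorial_pos k) (aux_fact_le_asc m k hm)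

lemma aux_asc_ne (m k : ℕ) (hm : 1 ≤ m) : (m.ascFactorial k : ℂ) ≠ 0 :=
  Nat.cast_ne_zero.mpr (aux_asc_pos m k hm).ne'

lemma aux_summable (m : ℕ) (hm : 1 ≤ m) (z : ℂ) (hz : ‖z‖ < 1) :
    Summable (fun k : ℕ => auxA m k * z ^ k) := by
  apply Summable.of_norm_bounded (summable_geometric_of_lt_one (norm_nonneg z) hz)
  intro k
  rw [norm_mul, norm_pow]
  have h1 : ‖auxA m k‖ ≤ 1 := by
    rw [auxA, norm_div, Complex.norm_natCast, Complex.norm_natCast]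
    rw [div_le_one (by exact_mod_cast aux_asc_pos m k hm)]
    exact_mod_cast aux_fact_le_asc m k hm
  calc ‖auxA m k‖ * ‖z‖ ^ k ≤ 1 * ‖z‖ ^ k :=
        mul_le_mul_of_nonneg_right h1 (by positivity)
    _ = ‖z‖ ^ k := one_mul _

lemma hypF_eq (m : ℕ) (hm : 1 ≤ m) (z : ℂ) :
    hypF 1 1 (m : ℂ) z = ∑' k : ℕ, auxA m k * z ^ k := by
  unfold hypF
  apply tsum_congr
  intro k
  congr 1
  have h1 : (ascPochhammer ℂ k).eval 1 = (k.factorial : ℂ) := by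
    have := ascPochhammer_eval_cast (S := ℂ) k 1
    rw [ascPochhammer_nat_eq_ascFactorial, Nat.one_ascFactorial] at this
    simpa using this.symm
  have h2 : (ascPochhammer ℂ k).eval (m : ℂ) = (m.ascFactorial k : ℂ) := by
    have := ascPochhammer_eval_cast (S := ℂ) k m
    rw [ascPochhammer_nat_eq_ascFactorial] at this
    simpa using this.symm
  rw [h1, h2, auxA]
  have hk : (k.factorial : ℂ) ≠ 0 := Nat.cast_ne_zero.mpr (Nat.factorial_pos k).ne'
  have hA : (m.ascFactorial k : ℂ) ≠ 0 := aux_asc_ne m k hm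
  field_simp

lemma aux_coeff_rec (m k : ℕ) (hm : 1 ≤ m) :
    auxA m (k + 1) - auxA m k = -(((m : ℂ) - 1) / m) * auxA (m + 1) k := by
  have hA : (m.ascFactorial k : ℂ) ≠ 0 := aux_asc_ne m k hm
  have hB : ((m + 1).ascFactorial k : ℂ) ≠ 0 := aux_asc_ne (m + 1) k (by omega)
  have hmk : ((m : ℂ) + k) ≠ 0 := by
    have : (0:ℝ) < (m:ℝ) + k := by
      have : (1:ℝ) ≤ (m:ℝ) := by exact_mod_cast hm
      positivity
    intro h
    have : ((m:ℝ) + k) = 0 := by exact_mod_cast congrArg Complex.re h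
    linarith
  have hm0 : (m : ℂ) ≠ 0 := Nat.cast_ne_zero.mpr (by omega)
  have hrel : (m : ℂ) * ((m + 1).ascFactorial k : ℂ) = ((m : ℂ) + k) * (m.ascFactorial k : ℂ) := by
    have h := Nat.succ_ascFactorial m k
    have : ((m * (m+1).ascFactorial k : ℕ) : ℂ) = (((m + k) * m.ascFactorial k : ℕ) : ℂ) := by
      exact_mod_cast congrArg (Nat.cast : ℕ → ℂ) h
    push_cast at this
    exact this
  have hsucc : (m.ascFactorial (k + 1) : ℂ) = ((m : ℂ) + k) * (m.ascFactorial k : ℂ) := by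
    rw [Nat.ascFactorial_succ]; push_cast; ring
  have hBe : (((m + 1).ascFactorial k : ℕ) : ℂ) = ((m : ℂ) + k) * (m.ascFactorial k : ℂ) / m := by
    field_simp
    linear_combination hrel
  rw [auxA, auxA, auxA, hsucc, Nat.factorial_succ, hBe]
  push_cast
  field_simp
  ring

set_option maxHeartbeats 1000000 in
lemma aux_recurrence (m : ℕ) (hm : 1 ≤ m) (z : ℂ) (hz : ‖z‖ < 1) :
    (1 - z) * (∑' k : ℕ, auxA m k * z ^ k) =
      1 - (((m : ℂ) - 1) / m) * z * ∑' k : ℕ, auxA (m + 1) k * z ^ k := by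
  have hs := aux_summable m hm z hz
  have hshift : Summable (fun k : ℕ => auxA m (k + 1) * z ^ (k + 1)) :=
    (summable_nat_add_iff 1).mpr hs
  have h1 : (∑' k : ℕ, auxA m k * z ^ k) =
      auxA m 0 * z ^ 0 + ∑' k : ℕ, auxA m (k + 1) * z ^ (k + 1) :=
    Summable.tsum_eq_zero_add hs
  have h2 : z * (∑' k : ℕ, auxA m k * z ^ k) = ∑' k : ℕ, auxA m k * z ^ (k + 1) := by
    rw [← tsum_mul_left]
    apply tsum_congr; intro k; ring
  have h0 : auxA m 0 * z ^ 0 = 1 := by simp [auxA]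
  have h3 : (∑' k : ℕ, auxA m (k + 1) * z ^ (k + 1)) - (∑' k : ℕ, auxA m k * z ^ (k + 1)) =
      ∑' k : ℕ, (auxA m (k + 1) - auxA m k) * z ^ (k + 1) := by
    rw [← Summable.tsum_sub hshift ?hsum2]
    · apply tsum_congr; intro k; ring
    case hsum2 =>
      have := hs.mul_left z
      apply this.congr
      intro k; ring
  have h4 : (∑' k : ℕ, (auxA m (k + 1) - auxA m k) * z ^ (k + 1)) =
      -(((m : ℂ) - 1) / m) * z * ∑' k : ℕ, auxA (m + 1) k * z ^ k := by
    rw [mul_assoc, ← tsum_mul_left, ← tsum_mul_left]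
    apply tsum_congr; intro k
    rw [aux_coeff_rec m k hm]
    ring
  have key : (1 - z) * (∑' k : ℕ, auxA m k * z ^ k) =
      (auxA m 0 * z ^ 0 + ∑' k : ℕ, auxA m (k + 1) * z ^ (k + 1))
        - ∑' k : ℕ, auxA m k * z ^ (k + 1) := by
    rw [← h1, sub_mul, one_mul, h2]
  rw [key, h0, add_sub_assoc, h3, h4]
  ring

lemma aux_base (z : ℂ) (hz : ‖z‖ < 1) (hz0 : z ≠ 0) :
    (∑' k : ℕ, auxA 2 k * z ^ k) = -Complex.log (1 - z) / z := by
  have hasc : ∀ k : ℕ, (2 : ℕ).ascFactorial k = (k + 1).factorial := by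
    intro k
    induction k with
    | zero => simp
    | succ k ih =>
      rw [Nat.ascFactorial_succ, ih, show 2 + k = (k + 1) + 1 from by omega,
        Nat.factorial_succ ((k+1))]
  have hnorm : ‖z‖ < 1 := hz
  have H := Complex.hasSum_taylorSeries_neg_log hnorm
  have H1 : HasSum (fun k : ℕ => z ^ (k + 1) / ((k : ℂ) + 1)) (-Complex.log (1 - z)) := by
    have h := (hasSum_nat_add_iff' 1).mpr H
    simp only [Finset.range_one, Finset.sum_singleton, pow_zero, Nat.cast_zero, div_zero,
      sub_zero] at h
    convert h using 2 with k
    · rfl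
    push_cast
    ring
  have key : z * (∑' k : ℕ, auxA 2 k * z ^ k) = -Complex.log (1 - z) := by
    rw [← tsum_mul_left, ← H1.tsum_eq]
    apply tsum_congr
    intro k
    rw [auxA, hasc k, Nat.factorial_succ]
    have hk : ((k : ℂ) + 1) ≠ 0 := Nat.cast_add_one_ne_zero k
    have hkf : (k.factorial : ℂ) ≠ 0 := Nat.cast_ne_zero.mpr (Nat.factorial_pos k).ne'
    push_cast
    field_simp
    ring
  rw [eq_div_iff hz0, mul_comm, key]

lemma aux_main (z : ℂ) (hz : ‖z‖ < 1) (hz0 : z ≠ 0) : ∀ n : ℕ,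
    (∑' k : ℕ, auxA (n + 2) k * z ^ k) =
      (((n : ℂ) + 1) / z) *
        ((∑ s ∈ Finset.Icc 1 n, (1 / (s : ℂ)) * ((z - 1) / z) ^ (n - s)) -
          ((z - 1) / z) ^ n * Complex.log (1 - z)) := by
  intro n
  induction n with
  | zero =>
    rw [aux_base z hz hz0]
    rw [show Finset.Icc 1 0 = (∅ : Finset ℕ) from Finset.Icc_eq_empty (by omega)]
    simp
    ring
  | succ n ih =>
    have hne1 : ((n : ℂ) + 1) ≠ 0 := Nat.cast_add_one_ne_zero n
    have hne2 : ((n : ℂ) + 2) ≠ 0 := by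
      have : ((n : ℂ) + 2) = (((n + 1 : ℕ) : ℂ) + 1) := by push_cast; ring
      rw [this]; exact Nat.cast_add_one_ne_zero (n + 1)
    have hrec := aux_recurrence (n + 2) (by omega) z hz
    push_cast at hrec
    have hSig : (∑ s ∈ Finset.Icc 1 (n + 1), (1 / (s : ℂ)) * ((z - 1) / z) ^ (n + 1 - s)) =
        ((z - 1) / z) * (∑ s ∈ Finset.Icc 1 n, (1 / (s : ℂ)) * ((z - 1) / z) ^ (n - s))
          + 1 / ((n : ℂ) + 1) := by
      rw [Finset.sum_Icc_succ_top (by omega : 1 ≤ n + 1)]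
      rw [Finset.mul_sum]
      congr 1
      · apply Finset.sum_congr rfl
        intro s hs
        have hs' : s ≤ n := (Finset.mem_Icc.mp hs).2
        rw [show n + 1 - s = (n - s) + 1 from by omega, pow_succ]
        ring
      · rw [Nat.sub_self, pow_zero, mul_one]
        push_cast
        ring
    push_cast
    rw [hSig]
    set F := ∑' k : ℕ, auxA (n + 1 + 2) k * z ^ k with hF
    set G := ∑' k : ℕ, auxA (n + 2) k * z ^ k with hG
    have hrec2 : (1 - z) * G = 1 - (((n : ℂ) + 1) / ((n : ℂ) + 2)) * z * F := by
      convert hrec using 3 <;> push_cast <;> ring_nf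
    rw [ih] at hrec2
    set S := ∑ s ∈ Finset.Icc 1 n, (1 / (s : ℂ)) * ((z - 1) / z) ^ (n - s) with hS
    set L := Complex.log (1 - z) with hL
    set W := (z - 1) / z with hW
    have hWz : 1 - z = -(W * z) := by rw [hW]; field_simp; ring
    rw [hWz] at hrec2
    field_simp at hrec2 ⊢
    linear_combination hrec2

/-- For `n ≥ 1` and `0 < |z| < 1`,
`F(1,1,n+2,z) = ((n+1)/z)(∑_{s=1}^n (1/s)((z-1)/z)^{n-s} − ((z-1)/z)^n log(1−z))`. -/
theorem stmt_2 (n : ℕ) (hn : 1 ≤ n) (z : ℂ) (hz : ‖z‖ < 1) (hz0 : z ≠ 0) :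
    hypF 1 1 ((n : ℂ) + 2) z =
      (((n : ℂ) + 1) / z) *
        ((∑ s ∈ Finset.Icc 1 n, (1 / (s : ℂ)) * ((z - 1) / z) ^ (n - s)) -
          ((z - 1) / z) ^ n * Complex.log (1 - z)) := by
  have hcast : ((n : ℂ) + 2) = ((n + 2 : ℕ) : ℂ) := by push_cast; ring
  rw [hcast, hypF_eq (n + 2) (by omega) z, aux_main z hz hz0 n]
end

section
/- For a fixed real z with 0 < |z| < 1, the sequence σ_N(z) = z^N ∑_{s=1}^{N} z^{−s}/s satisfies σ_N(z) ∼ 1/((1−z) N) as N → ∞, i.e. N·σ_N(z) → 1/(1−z). -/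
open scoped BigOperators
open Filter

/-- For a fixed real `z` with `0 < |z| < 1`, the sequence
`σ_N(z) = z^N ∑_{s=1}^N z^{−s}/s` satisfies `N·σ_N(z) → 1/(1−z)` as `N → ∞`. -/
theorem stmt_8 (z : ℝ) (hz0 : z ≠ 0) (hz : |z| < 1) :
    Tendsto (fun N : ℕ =>
        (N : ℝ) * (z ^ N * ∑ s ∈ Finset.Icc 1 N, (1 / z ^ s) / (s : ℝ)))
      atTop (nhds (1 / (1 - z))) := by
  set f : ℕ → ℕ → ℝ := fun N k => if k < N then (N : ℝ) / ((N : ℝ) - (k : ℝ)) * z ^ k else 0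
    with hf
  have key : ∀ N : ℕ, (N : ℝ) * (z ^ N * ∑ s ∈ Finset.Icc 1 N, (1 / z ^ s) / (s : ℝ))
      = ∑' k, f N k := by
    intro N
    rw [tsum_eq_sum (s := Finset.range N)
      (by intro k hk; simp only [hf, Finset.mem_range, not_lt] at hk ⊢
          rw [if_neg (by omega)])]
    have h1 : ∑ k ∈ Finset.range N, f N k
        = ∑ k ∈ Finset.range N, (N : ℝ) / ((N : ℝ) - (k : ℝ)) * z ^ k := by
      apply Finset.sum_congr rfl
      intro k hk
      simp only [hf]
      rw [if_pos (Finset.mem_range.mp hk)]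
    rw [h1, ← Finset.sum_range_reflect]
    have hIcc : Finset.Icc 1 N = Finset.Ico 1 (N + 1) := (Finset.Ico_add_one_right_eq_Icc 1 N)
    rw [hIcc, Finset.sum_Ico_eq_sum_range, Finset.mul_sum, Finset.mul_sum]
    simp only [Nat.add_sub_cancel]
    apply Finset.sum_congr rfl
    intro i hi
    rw [Finset.mem_range] at hi
    have e : N - 1 - i + (i + 1) = N := by omega
    have h2 : (N : ℝ) - (↑(N - 1 - i) : ℝ) = (i : ℝ) + 1 := by
      calc (N : ℝ) - ↑(N - 1 - i) = ↑(N - 1 - i + (i + 1)) - ↑(N - 1 - i) := by rw [e]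
        _ = (i : ℝ) + 1 := by push_cast; ring
    have e2 : N - 1 - i + (1 + i) = N := by omega
    have h3 : z ^ (N - 1 - i) * z ^ (1 + i) = z ^ N := by rw [← pow_add, e2]
    have hc : ((1 + i : ℕ) : ℝ) = (i : ℝ) + 1 := by push_cast; ring
    rw [h2, hc]
    have hzp : z ^ (1 + i) ≠ 0 := pow_ne_zero _ hz0
    have hip : (i : ℝ) + 1 ≠ 0 := by positivity
    have h3' : z ^ (N - 1 - i) * (z * z ^ i) = z ^ N := by
      rw [← h3, pow_add, pow_one]
    field_simp
    linear_combination (-(N : ℝ)) * h3'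
  have hsum : Summable (fun k : ℕ => ((k : ℝ) + 1) * |z| ^ k) := by
    have h1 : Summable (fun k : ℕ => (k : ℝ) * |z| ^ k) := by
      simpa [pow_one] using
        summable_pow_mul_geometric_of_norm_lt_one 1 (r := |z|) (by simpa using hz)
    have h2 : Summable (fun k : ℕ => |z| ^ k) :=
      summable_geometric_of_lt_one (abs_nonneg z) hz
    simpa [add_mul] using h1.add h2
  have hpt : ∀ k : ℕ, Tendsto (fun N : ℕ => f N k) atTop (nhds (z ^ k)) := by
    intro k
    have hden : Tendsto (fun N : ℕ => (N : ℝ) - (k : ℝ)) atTop atTop :=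
      tendsto_atTop_add_const_right atTop (-(k : ℝ))
        tendsto_natCast_atTop_atTop |>.congr (by intro N; ring)
    have h0 : Tendsto (fun N : ℕ => (k : ℝ) / ((N : ℝ) - (k : ℝ))) atTop (nhds 0) :=
      Tendsto.div_atTop tendsto_const_nhds hden
    have h1 : Tendsto (fun N : ℕ => (1 + (k : ℝ) / ((N : ℝ) - (k : ℝ))) * z ^ k)
        atTop (nhds (z ^ k)) := by
      have := (h0.const_add 1).mul_const (z ^ k)
      simpa using this
    refine h1.congr' ?_
    filter_upwards [eventually_ge_atTop (k + 1)] with N hN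
    have hklt : k < N := by omega
    have hpos : (0 : ℝ) < (N : ℝ) - (k : ℝ) := by
      have : (k : ℝ) + 1 ≤ (N : ℝ) := by exact_mod_cast hN
      linarith
    simp only [hf, if_pos hklt]
    field_simp
    ring
  have hbd : ∀ᶠ N : ℕ in atTop, ∀ k : ℕ, ‖f N k‖ ≤ ((k : ℝ) + 1) * |z| ^ k := by
    filter_upwards with N
    intro k
    by_cases hk : k < N
    · have hpos : (0 : ℝ) < (N : ℝ) - (k : ℝ) := by
        have : (k : ℝ) + 1 ≤ (N : ℝ) := by exact_mod_cast hk
        linarith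
      have hle : (N : ℝ) / ((N : ℝ) - (k : ℝ)) ≤ (k : ℝ) + 1 := by
        rw [div_le_iff₀ hpos]
        have hk1 : (k : ℝ) + 1 ≤ (N : ℝ) := by exact_mod_cast hk
        nlinarith [mul_nonneg (Nat.cast_nonneg (α := ℝ) k)
          (by linarith : (0 : ℝ) ≤ (N : ℝ) - (k : ℝ) - 1)]
      simp only [hf, if_pos hk, Real.norm_eq_abs, abs_mul, abs_pow]
      have : |(N : ℝ) / ((N : ℝ) - (k : ℝ))| = (N : ℝ) / ((N : ℝ) - (k : ℝ)) :=
        abs_of_nonneg (div_nonneg (Nat.cast_nonneg N) hpos.le)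
      rw [this]
      exact mul_le_mul_of_nonneg_right hle (by positivity)
    · simp only [hf, if_neg hk, norm_zero]
      positivity
  have hmain := tendsto_tsum_of_dominated_convergence hsum hpt hbd
  have hgeo : ∑' k : ℕ, z ^ k = 1 / (1 - z) := by
    rw [tsum_geometric_of_abs_lt_one hz, one_div]
  rw [← hgeo]
  exact hmain.congr (fun N => (key N).symm)
end

section
/- For every real z < 1 with z ≠ 0, and every N ≥ 1, the partial sums satisfy ∑_{n=1}^{N} (z/(n+1)) F(1,1,n+2,z) = z H_N + (1−z) log(1−z) + (1−z) R_N, where H_N is the N-th harmonic number and R_N = z̃^N ( ∑_{s=1}^{N} z̃^{−s}/s − log(1−z) ) with z̃ = (z−1)/z. -/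
open scoped BigOperators

/-- The Gauss hypergeometric function `F(1,1,n+2,z)` for real `z < 1`, `z ≠ 0`, given by
its closed form `((n+1)/z)(∑_{s=1}^n (1/s) z̃^{n−s} − z̃^n log(1−z))` with `z̃ = (z−1)/z`
(this agrees with the hypergeometric series for `|z| < 1` and is its analytic
continuation for `z ≤ −1`). -/
noncomputable def F11 (n : ℕ) (z : ℝ) : ℝ :=
  (((n : ℝ) + 1) / z) *
    ((∑ s ∈ Finset.Icc 1 n, (1 / (s : ℝ)) * ((z - 1) / z) ^ (n - s)) -
      ((z - 1) / z) ^ n * Real.log (1 - z))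

lemma aux9 (w L : ℝ) (hw : w ≠ 0) (h1w : 1 - w ≠ 0) (N : ℕ) (hN : 1 ≤ N) :
    ∑ n ∈ Finset.Icc 1 N, w ^ n * ((∑ s ∈ Finset.Icc 1 n, (1 / w ^ s) / (s : ℝ)) - L)
      = (1 / (1 - w)) * (∑ s ∈ Finset.Icc 1 N, (1 : ℝ) / (s : ℝ)) + (1 - 1 / (1 - w)) * L +
        (1 - 1 / (1 - w)) * (w ^ N * ((∑ s ∈ Finset.Icc 1 N, (1 / w ^ s) / (s : ℝ)) - L)) := by
  induction N, hN using Nat.le_induction with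
  | base =>
      simp only [Finset.Icc_self, Finset.sum_singleton, Nat.cast_one, pow_one]
      field_simp
      ring
  | succ N hN ih =>
      rw [Finset.sum_Icc_succ_top (by omega : 1 ≤ N + 1),
        Finset.sum_Icc_succ_top (by omega : 1 ≤ N + 1),
        Finset.sum_Icc_succ_top (by omega : 1 ≤ N + 1), ih]
      have hN1 : ((N : ℝ) + 1) ≠ 0 := by positivity
      push_cast
      field_simp
      ring

/-- For every real `z < 1` with `z ≠ 0` and every `N ≥ 1`,
`∑_{n=1}^N (z/(n+1)) F(1,1,n+2,z) = z H_N + (1−z) log(1−z) + (1−z) R_N`,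
where `H_N` is the `N`-th harmonic number and
`R_N = z̃^N (∑_{s=1}^N z̃^{−s}/s − log(1−z))` with `z̃ = (z−1)/z`. -/
theorem stmt_9 (z : ℝ) (hz : z < 1) (hz0 : z ≠ 0) (N : ℕ) (hN : 1 ≤ N) :
    (∑ n ∈ Finset.Icc 1 N, (z / ((n : ℝ) + 1)) * F11 n z) =
      z * (∑ s ∈ Finset.Icc 1 N, (1 : ℝ) / (s : ℝ)) + (1 - z) * Real.log (1 - z) +
        (1 - z) * (((z - 1) / z) ^ N *
          ((∑ s ∈ Finset.Icc 1 N, (1 / ((z - 1) / z) ^ s) / (s : ℝ)) - Real.log (1 - z))) := by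
  have hz1 : z - 1 ≠ 0 := by linarith
  set w := (z - 1) / z with hw_def
  set L := Real.log (1 - z) with hL
  have hw : w ≠ 0 := div_ne_zero hz1 hz0
  have h1w : 1 - w = 1 / z := by rw [hw_def]; field_simp; ring
  have h1w0 : 1 - w ≠ 0 := by rw [h1w]; exact one_div_ne_zero hz0
  have hz_eq : z = 1 / (1 - w) := by rw [h1w]; field_simp
  have key : ∀ n ∈ Finset.Icc 1 N, (z / ((n : ℝ) + 1)) * F11 n z
      = w ^ n * ((∑ s ∈ Finset.Icc 1 n, (1 / w ^ s) / (s : ℝ)) - L) := by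
    intro n hn
    have hn1 : ((n : ℝ) + 1) ≠ 0 := by positivity
    unfold F11
    rw [← hw_def, ← hL]
    have h1 : (z / ((n : ℝ) + 1)) * ((((n : ℝ) + 1) / z) *
        ((∑ s ∈ Finset.Icc 1 n, (1 / (s : ℝ)) * w ^ (n - s)) - w ^ n * L))
        = (∑ s ∈ Finset.Icc 1 n, (1 / (s : ℝ)) * w ^ (n - s)) - w ^ n * L := by
      field_simp
    rw [h1, mul_sub, Finset.mul_sum]
    congr 1
    refine Finset.sum_congr rfl fun s hs => ?_
    have hsn : s ≤ n := (Finset.mem_Icc.mp hs).2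
    rw [pow_sub₀ w hw hsn]
    field_simp
  rw [Finset.sum_congr rfl key, aux9 w L hw h1w0 N hN, ← hz_eq]
end

section
/- Let q ≥ 1 be a natural number, z a real (or complex) parameter, and let ω_1,…,ω_q be the roots (with multiplicity) of the polynomial x ↦ ∏_{k=1}^q (x − ω_k) = z^{-q} (x+1−q)_q F(−q, q+1, x+1−q, z) (the Meixner polynomial M_q(x; −2q, z/(z−1)) up to normalization). Then ∑_{k=1}^{q} ω_k = q(q+1) z + q(q−1)/2. -/
open scoped BigOperators
open Polynomial Finset

lemma asc_eval_prod (m : ℕ) (y : ℂ) :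
    (ascPochhammer ℂ m).eval y = ∏ j ∈ Finset.range m, (y + j) := by
  induction m with
  | zero => simp
  | succ n ih => rw [ascPochhammer_succ_eval, ih, Finset.prod_range_succ]

lemma sum_range_cast (q : ℕ) :
    ∑ j ∈ Finset.range q, (j : ℂ) = (q : ℂ) * ((q : ℂ) - 1) / 2 := by
  induction q with
  | zero => simp
  | succ n ih => rw [Finset.sum_range_succ, ih]; push_cast; ring

lemma coeff_top {σ : Type*} (s : Finset σ) (a : σ → ℂ) :
    (∏ j ∈ s, (X + C (a j))).coeff (#s) = 1 := by
  rw [Finset.prod_X_add_C_coeff _ _ (le_refl _)]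
  simp

lemma coeff_sub_one {σ : Type*} (s : Finset σ) (hm : 1 ≤ #s) (a : σ → ℂ) :
    (∏ j ∈ s, (X + C (a j))).coeff (#s - 1) = ∑ j ∈ s, a j := by
  rw [Finset.prod_X_add_C_coeff _ _ (Nat.sub_le _ _)]
  rw [Nat.sub_sub_self hm, Finset.powersetCard_one]
  simp

lemma coeff_zero_of_lt (m k : ℕ) (h : m < k) (a : ℕ → ℂ) :
    (∏ j ∈ Finset.range m, (X + C (a j))).coeff k = 0 := by
  apply Polynomial.coeff_eq_zero_of_natDegree_lt
  apply lt_of_le_of_lt (Polynomial.natDegree_prod_le _ _)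
  calc ∑ j ∈ Finset.range m, (X + C (a j)).natDegree ≤ ∑ j ∈ Finset.range m, 1 := by
        apply Finset.sum_le_sum; intro i _; exact le_of_eq (Polynomial.natDegree_X_add_C _)
    _ = m := by simp
    _ < k := h

/-- Sum of the roots of the (monic, degree `q`) Meixner-type polynomial
`x ↦ z^{-q} (x+1−q)_q F(−q, q+1, x+1−q, z)`
`= z^{-q} ∑_{s=0}^q ((−q)_s (q+1)_s / s!) z^s (x+1−q+s)_{q−s}`
(the second form results from cancelling `(x+1−q)_s` and is valid identically in `x`).
If `ω_1, …, ω_q` are its roots with multiplicity, then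
`∑_k ω_k = q(q+1) z + q(q−1)/2`. -/
theorem stmt_10 (q : ℕ) (hq : 1 ≤ q) (z : ℂ) (hz : z ≠ 0) (ω : Fin q → ℂ)
    (hroots : ∀ x : ℂ,
      (∏ k : Fin q, (x - ω k)) =
        z ^ (-(q : ℤ)) * ∑ s ∈ Finset.range (q + 1),
          ((ascPochhammer ℂ s).eval (-(q : ℂ)) * (ascPochhammer ℂ s).eval ((q : ℂ) + 1) /
              (Nat.factorial s : ℂ)) * z ^ s *
            (ascPochhammer ℂ (q - s)).eval (x + 1 - (q : ℂ) + (s : ℂ))) :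
    (∑ k : Fin q, ω k) = (q : ℂ) * ((q : ℂ) + 1) * z + (q : ℂ) * ((q : ℂ) - 1) / 2 := by
  set c : ℕ → ℂ := fun s => (ascPochhammer ℂ s).eval (-(q : ℂ)) *
      (ascPochhammer ℂ s).eval ((q : ℂ) + 1) / (Nat.factorial s : ℂ) with hc
  set u : ℂ := z ^ (-(q : ℤ)) with hu
  set Q : ℂ[X] := C u * ∑ s ∈ Finset.range (q + 1),
      C (c s * z ^ s) * ∏ j ∈ Finset.range (q - s), (X + C ((1 : ℂ) - q + s + j)) with hQ
  have hPQ : (∏ k : Fin q, (X - C (ω k))) = Q := by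
    apply Polynomial.funext
    intro x
    rw [Polynomial.eval_prod]
    simp only [Polynomial.eval_sub, Polynomial.eval_X, Polynomial.eval_C]
    rw [hroots x, hQ]
    simp only [Polynomial.eval_mul, Polynomial.eval_C, Polynomial.eval_finset_sum,
      Polynomial.eval_prod, Polynomial.eval_add, Polynomial.eval_X]
    congr 1
    apply Finset.sum_congr rfl
    intro s _
    congr 1
    rw [asc_eval_prod]
    apply Finset.prod_congr rfl
    intro j _
    push_cast
    ring
  have hQcoeff : ∀ k : ℕ, Q.coeff k = u * ∑ s ∈ Finset.range (q + 1),
      (c s * z ^ s) * (∏ j ∈ Finset.range (q - s), (X + C ((1 : ℂ) - q + s + j))).coeff k := by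
    intro k
    rw [hQ, Polynomial.coeff_C_mul, Polynomial.finset_sum_coeff]
    congr 1
    apply Finset.sum_congr rfl
    intro s _
    rw [Polynomial.coeff_C_mul]
  -- rewrite P as ∏ (X + C (-ω k))
  have hPform : (∏ k : Fin q, (X - C (ω k))) = ∏ k : Fin q, (X + C (-(ω k))) := by
    apply Finset.prod_congr rfl
    intro k _
    rw [map_neg, sub_eq_add_neg]
  have hc0 : c 0 = 1 := by simp [hc]
  have hc1 : c 1 = (-(q : ℂ)) * ((q : ℂ) + 1) := by simp [hc]
  -- coefficient q
  have hP1 : (∏ k : Fin q, (X - C (ω k))).coeff q = 1 := by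
    rw [hPform]
    have := coeff_top (Finset.univ : Finset (Fin q)) (fun k => -(ω k))
    simpa using this
  have hQ1 : Q.coeff q = u := by
    rw [hQcoeff]
    rw [Finset.sum_eq_single 0]
    · have h := coeff_top (Finset.range q) (fun j => (1 : ℂ) - q + 0 + j)
      rw [Finset.card_range] at h
      simp only [Nat.sub_zero, Nat.cast_zero, add_zero] at h ⊢
      rw [h, hc0]
      norm_num
    · intro s hs hs0
      rw [coeff_zero_of_lt (q - s) q (by rw [Finset.mem_range] at hs; omega), mul_zero]
    · intro h
      simp at h
  -- coefficient q - 1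
  have hP2 : (∏ k : Fin q, (X - C (ω k))).coeff (q - 1) = -∑ k : Fin q, ω k := by
    rw [hPform]
    have := coeff_sub_one (Finset.univ : Finset (Fin q)) (by simpa using hq) (fun k => -(ω k))
    simp only [Finset.card_univ, Fintype.card_fin] at this
    rw [this, ← Finset.sum_neg_distrib]
  have hE : ∑ j ∈ Finset.range q, ((1 : ℂ) - q + j) =
      (q : ℂ) * (1 - q) + (q : ℂ) * ((q : ℂ) - 1) / 2 := by
    rw [Finset.sum_add_distrib, sum_range_cast, Finset.sum_const, Finset.card_range]
    push_cast
    ring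
  have hQ2 : Q.coeff (q - 1) =
      u * (((q : ℂ) * (1 - q) + (q : ℂ) * ((q : ℂ) - 1) / 2) + (-(q : ℂ)) * ((q : ℂ) + 1) * z) := by
    rw [hQcoeff]
    congr 1
    have hsplit : Finset.range (q + 1) = Finset.range 2 ∪ Finset.Ico 2 (q + 1) := by
      rw [Finset.range_eq_Ico]
      exact (Finset.Ico_union_Ico_eq_Ico (by omega) (by omega)).symm
    rw [hsplit, Finset.sum_union]
    · have h2 : ∑ s ∈ Finset.Ico 2 (q + 1),
          (c s * z ^ s) * (∏ j ∈ Finset.range (q - s), (X + C ((1 : ℂ) - q + s + j))).coeff (q - 1)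
          = 0 := by
        apply Finset.sum_eq_zero
        intro s hs
        rw [Finset.mem_Ico] at hs
        rw [coeff_zero_of_lt (q - s) (q - 1) (by omega), mul_zero]
      rw [h2, add_zero]
      rw [Finset.sum_range_succ, Finset.sum_range_one]
      simp only [Nat.cast_zero, Nat.cast_one, Nat.sub_zero, add_zero, pow_zero, pow_one]
      have ht0 : (∏ j ∈ Finset.range q, (X + C ((1 : ℂ) - q + 0 + j))).coeff (q - 1) =
          ∑ j ∈ Finset.range q, ((1 : ℂ) - q + 0 + j) := by
        have := coeff_sub_one (Finset.range q) (by simpa using hq) (fun j => (1 : ℂ) - q + 0 + j)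
        rw [Finset.card_range] at this
        simpa using this
      simp only [add_zero] at ht0
      have ht1 : (∏ j ∈ Finset.range (q - 1), (X + C ((1 : ℂ) - q + 1 + j))).coeff (q - 1) = 1 := by
        have := coeff_top (Finset.range (q - 1)) (fun j => (1 : ℂ) - q + 1 + j)
        rw [Finset.card_range] at this
        exact this
      rw [ht0, ht1, hE, hc0, hc1]
      push_cast
      ring
    · rw [Finset.range_eq_Ico]
      exact Finset.Ico_disjoint_Ico_consecutive 0 2 (q + 1)
  have e1 : (1 : ℂ) = u := by rw [← hP1, hPQ, hQ1]
  have e2 : -∑ k : Fin q, ω k = u *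
      (((q : ℂ) * (1 - q) + (q : ℂ) * ((q : ℂ) - 1) / 2) + (-(q : ℂ)) * ((q : ℂ) + 1) * z) := by
    rw [← hP2, hPQ, hQ2]
  rw [← e1, one_mul] at e2
  linear_combination -e2
end

section
/- For ± denoting sign η = ±1 and 0 < r₀ (with r₀ < 1 when η = −1): ∫_0^1 (4 r₀² r / (1 + η r₀² r²)²) · ( log(1 − r²) + γ − log 2 + log( 2 r₀/(1 + η r₀² r²) ) ) dr = (A/2π)(γ − 1 + log r₀), where A = 4π r₀²/(1 + η r₀²). -/
open Real Filter MeasureTheory intervalIntegral Topology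

-- integrability of log(1-r^2) on [0,1]
lemma L1 : IntervalIntegrable (fun r : ℝ => Real.log (1 - r ^ 2)) volume 0 1 := by
  have hg : IntervalIntegrable (fun r : ℝ => 2 * (1 - r) ^ (-(2⁻¹:ℝ))) volume 0 1 := by
    have h := ((intervalIntegrable_rpow' (show (-1:ℝ) < -(2⁻¹) by norm_num)
      (a := 0) (b := 1)).comp_sub_left 1).symm
    simpa using h.const_mul 2
  apply hg.mono_fun'
  · exact ((Real.measurable_log.comp
      ((measurable_const.sub ((measurable_id.pow_const 2))))).aestronglyMeasurable)
  · filter_upwards [ae_restrict_mem measurableSet_uIoc] with x hx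
    rw [Set.uIoc_of_le (by norm_num : (0:ℝ) ≤ 1)] at hx
    obtain ⟨hx0, hx1⟩ := hx
    rcases eq_or_lt_of_le hx1 with h1 | h1
    · subst h1
      simp only [one_pow, sub_self, Real.log_zero, norm_zero]
      positivity
    · have h2 : 0 < 1 - x ^ 2 := by nlinarith
      have h3 : 1 - x ^ 2 ≤ 1 := by nlinarith
      have h4 : Real.log (1 - x ^ 2) ≤ 0 := Real.log_nonpos (by linarith) h3
      rw [Real.norm_eq_abs, abs_of_nonpos h4]
      have h5 : -Real.log (1 - x ^ 2) = Real.log ((1 - x ^ 2)⁻¹) := (Real.log_inv _).symm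
      rw [h5]
      have h6 := Real.log_le_rpow_div (x := (1 - x ^ 2)⁻¹) (by positivity)
        (by norm_num : (0:ℝ) < 2⁻¹)
      calc Real.log ((1 - x ^ 2)⁻¹) ≤ ((1 - x ^ 2)⁻¹) ^ (2⁻¹:ℝ) / 2⁻¹ := h6
        _ = 2 * (1 - x ^ 2) ^ (-(2⁻¹:ℝ)) := by
            rw [Real.inv_rpow h2.le, ← Real.rpow_neg h2.le,  ]
            rw [div_eq_mul_inv, inv_inv, mul_comm]
        _ ≤ 2 * (1 - x) ^ (-(2⁻¹:ℝ)) := by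
            have h7 : 1 - x ≤ 1 - x ^ 2 := by nlinarith
            have := Real.rpow_le_rpow_of_nonpos (by linarith : (0:ℝ) < 1 - x) h7
              (by norm_num : -(2⁻¹:ℝ) ≤ 0)
            linarith

noncomputable def G (a r₀ : ℝ) (r : ℝ) : ℝ :=
  2 * r₀ ^ 2 *
    ((-(Real.eulerMascheroniConstant + Real.log r₀) + Real.log (1 + a * r ^ 2) + 1) /
        (a * (1 + a * r ^ 2)) +
      (r ^ 2 - 1) * Real.log (1 - r ^ 2) / ((1 + a) * (1 + a * r ^ 2)) -
      Real.log (1 + a * r ^ 2) / (a * (1 + a)))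

lemma L2 (a r₀ : ℝ) (ha : a ≠ 0) (h1a : 1 + a ≠ 0) (r : ℝ)
    (h2 : 1 - r ^ 2 ≠ 0) (h3 : 1 + a * r ^ 2 ≠ 0) :
    HasDerivAt (G a r₀)
      ((4 * r₀ ^ 2 * r / (1 + a * r ^ 2) ^ 2) *
        (Real.log (1 - r ^ 2) + Real.eulerMascheroniConstant - Real.log 2 +
          (Real.log 2 + Real.log r₀ - Real.log (1 + a * r ^ 2)))) r := by
  have hp : HasDerivAt (fun x : ℝ => 1 + a * x ^ 2) (a * (2 * r)) r := by
    simpa using ((hasDerivAt_pow 2 r).const_mul a).const_add 1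
  have hq : HasDerivAt (fun x : ℝ => 1 - x ^ 2) (-(2 * r)) r := by
    simpa using (hasDerivAt_pow 2 r).const_sub 1
  have hlt : HasDerivAt (fun x : ℝ => Real.log (1 + a * x ^ 2))
      (a * (2 * r) / (1 + a * r ^ 2)) r := hp.log h3
  have hl1 : HasDerivAt (fun x : ℝ => Real.log (1 - x ^ 2)) (-(2 * r) / (1 - r ^ 2)) r :=
    hq.log h2
  have T1 := ((hlt.const_add (-(Real.eulerMascheroniConstant + Real.log r₀))).add_const 1).div
    (hp.const_mul a) (mul_ne_zero ha h3)
  have T2 := (((hasDerivAt_pow 2 r).sub_const 1).mul hl1).div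
    (hp.const_mul (1 + a)) (mul_ne_zero h1a h3)
  have T3 := hlt.div_const (a * (1 + a))
  have := ((T1.add T2).sub T3).const_mul (2 * r₀ ^ 2)
  convert this using 1
  case e'_8 => rfl
  case e'_9 =>
    simp only [Pi.mul_apply, Nat.cast_ofNat, Nat.add_one_sub_one, pow_one]
    have h3' : 1 + r ^ 2 * a ≠ 0 := by rwa [mul_comm]
    field_simp
    ring
  all_goals rfl

lemma L3 (a r₀ : ℝ) (ha : a ≠ 0) (hr₀ : 0 < r₀)
    (hpos : ∀ r : ℝ, 0 ≤ r → r ≤ 1 → 0 < 1 + a * r ^ 2) :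
    (∫ r in (0:ℝ)..1,
        (4 * r₀ ^ 2 * r / (1 + a * r ^ 2) ^ 2) *
          (Real.log (1 - r ^ 2) + Real.eulerMascheroniConstant - Real.log 2 +
            Real.log (2 * r₀ / (1 + a * r ^ 2)))) =
      2 * r₀ ^ 2 / (1 + a) * (Real.eulerMascheroniConstant - 1 + Real.log r₀) := by
  have h1a : (0:ℝ) < 1 + a := by have := hpos 1 zero_le_one le_rfl; nlinarith
  have h1a' : (1:ℝ) + a ≠ 0 := h1a.ne'
  -- rewrite the integrand
  have hcong : Set.EqOn
      (fun r : ℝ => (4 * r₀ ^ 2 * r / (1 + a * r ^ 2) ^ 2) *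
          (Real.log (1 - r ^ 2) + Real.eulerMascheroniConstant - Real.log 2 +
            Real.log (2 * r₀ / (1 + a * r ^ 2))))
      (fun r : ℝ => (4 * r₀ ^ 2 * r / (1 + a * r ^ 2) ^ 2) *
          (Real.log (1 - r ^ 2) + Real.eulerMascheroniConstant - Real.log 2 +
            (Real.log 2 + Real.log r₀ - Real.log (1 + a * r ^ 2))))
      (Set.uIcc 0 1) := by
    intro r hr
    rw [Set.uIcc_of_le (by norm_num : (0:ℝ) ≤ 1)] at hr
    have h3 := hpos r hr.1 hr.2
    simp only
    rw [Real.log_div (by positivity) h3.ne', Real.log_mul two_ne_zero hr₀.ne']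
  rw [intervalIntegral.integral_congr hcong]
  -- continuity facts
  have hψ : ContinuousOn (fun r : ℝ => 4 * r₀ ^ 2 * r / (1 + a * r ^ 2) ^ 2)
      (Set.uIcc (0:ℝ) 1) := by
    apply ContinuousOn.div (by fun_prop) (by fun_prop)
    intro x hx
    rw [Set.uIcc_of_le (by norm_num : (0:ℝ) ≤ 1)] at hx
    exact pow_ne_zero _ (hpos x hx.1 hx.2).ne'
  have hlogc : ContinuousOn (fun r : ℝ => Real.log (1 + a * r ^ 2)) (Set.uIcc (0:ℝ) 1) := by
    apply ContinuousOn.log (by fun_prop)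
    intro x hx
    rw [Set.uIcc_of_le (by norm_num : (0:ℝ) ≤ 1)] at hx
    exact (hpos x hx.1 hx.2).ne'
  -- integrability
  have hint : IntervalIntegrable
      (fun r : ℝ => (4 * r₀ ^ 2 * r / (1 + a * r ^ 2) ^ 2) *
          (Real.log (1 - r ^ 2) + Real.eulerMascheroniConstant - Real.log 2 +
            (Real.log 2 + Real.log r₀ - Real.log (1 + a * r ^ 2)))) volume 0 1 := by
    have heq : (fun r : ℝ => (4 * r₀ ^ 2 * r / (1 + a * r ^ 2) ^ 2) *
          (Real.log (1 - r ^ 2) + Real.eulerMascheroniConstant - Real.log 2 +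
            (Real.log 2 + Real.log r₀ - Real.log (1 + a * r ^ 2)))) =
        (fun r : ℝ => (4 * r₀ ^ 2 * r / (1 + a * r ^ 2) ^ 2) * Real.log (1 - r ^ 2) +
          (4 * r₀ ^ 2 * r / (1 + a * r ^ 2) ^ 2) *
            (Real.eulerMascheroniConstant - Real.log 2 +
              (Real.log 2 + Real.log r₀ - Real.log (1 + a * r ^ 2)))) := by
      funext r; ring
    rw [heq]
    refine (L1.continuousOn_mul hψ).add (ContinuousOn.intervalIntegrable ?_)
    exact hψ.mul ((continuousOn_const.sub continuousOn_const).add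
      ((continuousOn_const.add continuousOn_const).sub hlogc))
  -- derivative on Ioo
  have hderiv : ∀ x ∈ Set.Ioo (0:ℝ) 1, HasDerivAt (G a r₀)
      ((4 * r₀ ^ 2 * x / (1 + a * x ^ 2) ^ 2) *
        (Real.log (1 - x ^ 2) + Real.eulerMascheroniConstant - Real.log 2 +
          (Real.log 2 + Real.log r₀ - Real.log (1 + a * x ^ 2)))) x := by
    intro x hx
    have hx2 : x ^ 2 < 1 := by nlinarith [hx.1, hx.2]
    exact L2 a r₀ ha h1a' x (by nlinarith) (hpos x hx.1.le hx.2.le).ne'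
  -- limit at 0
  have ha0 : Tendsto (G a r₀) (𝓝[>] (0:ℝ)) (𝓝 (G a r₀ 0)) :=
    ((L2 a r₀ ha h1a' 0 (by norm_num) (by norm_num)).continuousAt).continuousWithinAt
  -- limit at 1
  have h31 : (0:ℝ) < 1 + a * 1 ^ 2 := hpos 1 zero_le_one le_rfl
  have hb1 : Tendsto (G a r₀) (𝓝[<] (1:ℝ))
      (𝓝 (2 * r₀ ^ 2 *
        ((-(Real.eulerMascheroniConstant + Real.log r₀) + Real.log (1 + a * 1 ^ 2) + 1) /
            (a * (1 + a * 1 ^ 2)) + 0 -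
          Real.log (1 + a * 1 ^ 2) / (a * (1 + a))))) := by
    have hGdec : G a r₀ = fun x : ℝ => 2 * r₀ ^ 2 *
        ((-(Real.eulerMascheroniConstant + Real.log r₀) + Real.log (1 + a * x ^ 2) + 1) /
            (a * (1 + a * x ^ 2)) +
          (x ^ 2 - 1) * Real.log (1 - x ^ 2) / ((1 + a) * (1 + a * x ^ 2)) -
          Real.log (1 + a * x ^ 2) / (a * (1 + a))) := rfl
    rw [hGdec]
    have hc : ContinuousAt (fun x : ℝ => Real.log (1 + a * x ^ 2)) 1 :=
      ContinuousAt.log (by fun_prop) h31.ne'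
    -- singular term tends to 0
    have h0 : Tendsto (fun x : ℝ => Real.log x * x) (𝓝[>] (0:ℝ)) (𝓝 0) := by
      simpa [Real.rpow_one] using tendsto_log_mul_rpow_nhdsGT_zero one_pos
    have hmap : Tendsto (fun r : ℝ => 1 - r ^ 2) (𝓝[<] (1:ℝ)) (𝓝[>] (0:ℝ)) := by
      apply tendsto_nhdsWithin_of_tendsto_nhds_of_eventually_within
      · have hcont : Tendsto (fun r : ℝ => 1 - r ^ 2) (𝓝 1) (𝓝 (1 - 1 ^ 2)) :=
          ((continuous_const.sub (continuous_pow 2)).tendsto 1)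
        simpa using hcont.mono_left nhdsWithin_le_nhds
      · filter_upwards [Ioo_mem_nhdsLT_of_mem
          (Set.mem_Ioc.mpr ⟨by norm_num, le_refl (1:ℝ)⟩ : (1:ℝ) ∈ Set.Ioc (-1:ℝ) 1)] with x hx
        have : x ^ 2 < 1 := by nlinarith [hx.1, hx.2]
        simp only [Set.mem_Ioi]; linarith
    have hnum : Tendsto (fun r : ℝ => (r ^ 2 - 1) * Real.log (1 - r ^ 2)) (𝓝[<] (1:ℝ))
        (𝓝 0) := by
      have hcomp := h0.comp hmap
      have heq : (fun r : ℝ => (r ^ 2 - 1) * Real.log (1 - r ^ 2)) =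
          fun r : ℝ => -((fun x : ℝ => Real.log x * x) ((fun r : ℝ => 1 - r ^ 2) r)) := by
        funext r; simp; ring
      rw [heq]
      simpa using hcomp.neg
    have hden : Tendsto (fun x : ℝ => (1 + a) * (1 + a * x ^ 2)) (𝓝[<] (1:ℝ))
        (𝓝 ((1 + a) * (1 + a * 1 ^ 2))) :=
      (((continuous_const.mul (continuous_const.add (continuous_const.mul
        (continuous_pow 2)))).tendsto 1)).mono_left nhdsWithin_le_nhds
    have hsing : Tendsto (fun x : ℝ => (x ^ 2 - 1) * Real.log (1 - x ^ 2) /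
        ((1 + a) * (1 + a * x ^ 2))) (𝓝[<] (1:ℝ)) (𝓝 0) := by
      have := hnum.div hden (mul_ne_zero h1a' h31.ne')
      rw [zero_div] at this
      exact this
    have ht1 : Tendsto (fun x : ℝ =>
        (-(Real.eulerMascheroniConstant + Real.log r₀) + Real.log (1 + a * x ^ 2) + 1) /
          (a * (1 + a * x ^ 2))) (𝓝[<] (1:ℝ))
        (𝓝 ((-(Real.eulerMascheroniConstant + Real.log r₀) + Real.log (1 + a * 1 ^ 2) + 1) /
          (a * (1 + a * 1 ^ 2)))) := by
      refine Tendsto.div ?_ ?_ (mul_ne_zero ha h31.ne')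
      · exact (((hc.const_add _).add_const 1).mono_left nhdsWithin_le_nhds)
      · exact ((continuousAt_const.mul (by fun_prop : ContinuousAt (fun x : ℝ => 1 + a * x ^ 2) 1)).mono_left nhdsWithin_le_nhds)
    have ht3 : Tendsto (fun x : ℝ => Real.log (1 + a * x ^ 2) / (a * (1 + a))) (𝓝[<] (1:ℝ))
        (𝓝 (Real.log (1 + a * 1 ^ 2) / (a * (1 + a)))) :=
      ((hc.div_const _).mono_left nhdsWithin_le_nhds)
    exact ((ht1.add hsing).sub ht3).const_mul _
  have hFTC := intervalIntegral.integral_eq_sub_of_hasDerivAt_of_tendsto one_pos hderiv hint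
    ha0 hb1
  rw [hFTC]
  have hG0 : G a r₀ 0 = 2 * r₀ ^ 2 *
      ((-(Real.eulerMascheroniConstant + Real.log r₀) + 1) / a) := by
    simp [G, Real.log_one]
  rw [hG0]
  have hl : Real.log (1 + a * 1 ^ 2) = Real.log (1 + a) := by norm_num
  rw [hl]
  have h1 : (1:ℝ) + a * 1 ^ 2 = 1 + a := by ring
  rw [h1]
  field_simp
  ring



/-- For `η = ±1` and `r₀ > 0` (with `r₀ < 1` when `η = −1`), and `A = 4π r₀²/(1 + η r₀²)`:
`∫_0^1 (4 r₀² r/(1 + η r₀² r²)²)(log(1 − r²) + γ − log 2 + log(2 r₀/(1 + η r₀² r²))) dr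
  = (A/2π)(γ − 1 + log r₀)`. -/
theorem stmt_16 (η : ℝ) (hη : η = 1 ∨ η = -1) (r₀ : ℝ) (hr₀ : 0 < r₀)
    (hr₀1 : η = -1 → r₀ < 1) :
    (∫ r in (0 : ℝ)..1,
        (4 * r₀ ^ 2 * r / (1 + η * r₀ ^ 2 * r ^ 2) ^ 2) *
          (Real.log (1 - r ^ 2) + Real.eulerMascheroniConstant - Real.log 2 +
            Real.log (2 * r₀ / (1 + η * r₀ ^ 2 * r ^ 2)))) =
      ((4 * Real.pi * r₀ ^ 2 / (1 + η * r₀ ^ 2)) / (2 * Real.pi)) *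
        (Real.eulerMascheroniConstant - 1 + Real.log r₀) := by
  have ha : η * r₀ ^ 2 ≠ 0 := by
    rcases hη with h | h <;> subst h <;> [skip; rw [neg_mul, neg_ne_zero]] <;>
      simp <;> positivity
  have hpos : ∀ r : ℝ, 0 ≤ r → r ≤ 1 → 0 < 1 + η * r₀ ^ 2 * r ^ 2 := by
    intro r h0 h1
    rcases hη with h | h
    · subst h; positivity
    · have h2 := hr₀1 h; subst h
      have hr2 : r ^ 2 ≤ 1 := by nlinarith
      have hr02 : r₀ ^ 2 < 1 := by nlinarith
      nlinarith [mul_le_mul_of_nonneg_left hr2 (sq_nonneg r₀)]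
  have key := L3 (η * r₀ ^ 2) r₀ ha hr₀ hpos
  rw [key]
  have h1a : (0:ℝ) < 1 + η * r₀ ^ 2 := by have := hpos 1 zero_le_one le_rfl; nlinarith
  field_simp
  ring
end
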